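/- Suppose every Hamiltonian path of G from s to e exists only if the reduced graph has a Hamiltonian path P_R. Then any arc of the reduced graph that is not on P_R is a transitive arc: no Hamiltonian path of G from s to e uses an arc of G whose endpoints lie in two SCCs that are not consecutive on P_R. -/

import Mathlib

variable {V : Type*}

/-- Reachability in a directed graph given by arc relation `A`. -/
def Reach (A : V → V → Prop) : V → V → Prop := Relation.ReflTransGen A

/-- Two vertices are in the same strongly connected component. -/
def SameSCC (A : V → V → Prop) (u v : V) : Prop := Reach A u v ∧ Reach A v u

/-- The strongly connected component of a vertex. -/
def sccOf (A : V → V → Prop) (v : V) : Set V := {u | SameSCC A v u}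

/-- A set is a strongly connected component. -/
def IsSCC (A : V → V → Prop) (X : Set V) : Prop := ∃ v, X = sccOf A v

/-- Arcs of the reduced graph (condensation): between distinct SCCs joined by an arc of `A`. -/
def CondArc (A : V → V → Prop) (X Y : Set V) : Prop :=
  IsSCC A X ∧ IsSCC A Y ∧ X ≠ Y ∧ ∃ u ∈ X, ∃ v ∈ Y, A u v

/-- A directed graph is acyclic: no arc lies on a directed cycle. -/
def Acyclic (A : V → V → Prop) : Prop := ∀ u v, A u v → ¬ Reach A v u

/-- A Hamiltonian path of the digraph `A`, as a duplicate-free list visiting every vertex. -/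
def IsHamList (A : V → V → Prop) (p : List V) : Prop :=
  p.Chain' A ∧ p.Nodup ∧ ∀ v, v ∈ p

/-- A Hamiltonian path from `s` to `e`. -/
def IsHamPath (A : V → V → Prop) (s e : V) (p : List V) : Prop :=
  IsHamList A p ∧ p.head? = some s ∧ p.getLast? = some e

/-- A Hamiltonian path of the reduced graph: a duplicate-free list of SCCs, chained by
condensation arcs, containing every SCC. -/
def RHamPath (A : V → V → Prop) (P : List (Set V)) : Prop :=
  (∀ X ∈ P, IsSCC A X) ∧ P.Chain' (CondArc A) ∧ P.Nodup ∧ ∀ X, IsSCC A X → X ∈ P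


lemma mem_sccOf_self (A : V → V → Prop) (v : V) : v ∈ sccOf A v :=
  ⟨Relation.ReflTransGen.refl, Relation.ReflTransGen.refl⟩

lemma sccOf_eq_of_mem {A : V → V → Prop} {u v : V} (h : u ∈ sccOf A v) :
    sccOf A u = sccOf A v := by
  obtain ⟨hvu, huv⟩ := h
  ext w
  constructor
  · rintro ⟨huw, hwu⟩; exact ⟨hvu.trans huw, hwu.trans huv⟩
  · rintro ⟨hvw, hwv⟩; exact ⟨huv.trans hvw, hwv.trans hvu⟩

lemma chain_reach {α : Type*} {R : α → α → Prop} :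
    ∀ {x : α} {l : List α}, List.Chain R x l → ∀ y ∈ l, Relation.ReflTransGen R x y := by
  intro x l hc y hy
  induction l generalizing x with
  | nil => simp at hy
  | cons a t ih =>
    rcases List.chain_cons.mp hc with ⟨hxa, hat⟩
    rcases List.mem_cons.mp hy with rfl | hyt
    · exact Relation.ReflTransGen.single hxa
    · exact (Relation.ReflTransGen.single hxa).trans (ih hat hyt)

lemma chain'_reach {α : Type*} {R : α → α → Prop} {l l1 l2 : List α} {x y : α}
    (hc : List.Chain' R l) (hl : l = l1 ++ x :: l2) (hy : y ∈ l2) :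
    Relation.ReflTransGen R x y := by
  subst hl
  have hsuf : List.Chain' R (x :: l2) := hc.suffix ⟨l1, rfl⟩
  exact chain_reach hsuf y hy

lemma condReach {A : V → V → Prop} {X Y : Set V}
    (h : Relation.ReflTransGen (CondArc A) X Y) (hX : IsSCC A X) :
    ∀ x ∈ X, ∀ y ∈ Y, Reach A x y := by
  induction h with
  | refl =>
    rintro x hx y hy
    obtain ⟨w, rfl⟩ := hX
    exact hx.2.trans hy.1
  | tail hab hbc ih =>
    rintro x hx y hy
    obtain ⟨hB, hC, -, u0, hu0, v0, hv0, harc⟩ := hbc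
    obtain ⟨w, rfl⟩ := hC
    exact ((ih x hx u0 hu0).trans (Relation.ReflTransGen.single harc)).trans
      (hv0.2.trans hy.1)

lemma mem_split_order {α : Type*} {l : List α} {X Y : α}
    (hX : X ∈ l) (hY : Y ∈ l) (hne : X ≠ Y) :
    (∃ l1 l2, l = l1 ++ X :: l2 ∧ Y ∈ l2) ∨ (∃ l1 l2, l = l1 ++ Y :: l2 ∧ X ∈ l2) := by
  induction l with
  | nil => simp at hX
  | cons a t ih =>
    rcases eq_or_ne a X with rfl | hx
    · left
      refine ⟨[], t, rfl, ?_⟩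
      rcases List.mem_cons.mp hY with rfl | h
      · exact absurd rfl hne.symm
      · exact h
    · rcases eq_or_ne a Y with rfl | hy
      · right
        refine ⟨[], t, rfl, ?_⟩
        rcases List.mem_cons.mp hX with rfl | h
        · exact absurd rfl hne
        · exact h
      · have hX' : X ∈ t := by rcases List.mem_cons.mp hX with rfl | h; exact absurd rfl hx; exact h
        have hY' : Y ∈ t := by rcases List.mem_cons.mp hY with rfl | h; exact absurd rfl hy; exact h
        rcases ih hX' hY' with ⟨l1, l2, rfl, hm⟩ | ⟨l1, l2, rfl, hm⟩
        · exact Or.inl ⟨a :: l1, l2, rfl, hm⟩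
        · exact Or.inr ⟨a :: l1, l2, rfl, hm⟩

/-- Any arc of `G` whose endpoints lie in two SCCs that are not consecutive on the
reduced Hamiltonian path `P` is used by no Hamiltonian path of `G` from `s` to `e`. -/
theorem transitive_arc_infeasible (A : V → V → Prop) (s e : V)
    (P : List (Set V)) (hP : RHamPath A P)
    (u v : V) (hA : A u v) (hne : sccOf A u ≠ sccOf A v)
    (hnotconsec : ¬ [sccOf A u, sccOf A v] <:+: P) :
    ∀ H : List V, IsHamPath A s e H → ¬ [u, v] <:+: H := by
  intro H hHam hInf
  obtain ⟨hSCCs, hChain, hNodup, hAll⟩ := hP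
  have huP : sccOf A u ∈ P := hAll _ ⟨u, rfl⟩
  have hvP : sccOf A v ∈ P := hAll _ ⟨v, rfl⟩
  have huu : u ∈ sccOf A u := mem_sccOf_self A u
  have hvv : v ∈ sccOf A v := mem_sccOf_self A v
  rcases mem_split_order huP hvP hne with ⟨P1, P2, rfl, hm⟩ | ⟨P1, P2, rfl, hm⟩
  · -- sccOf u before sccOf v
    cases P2 with
    | nil => simp at hm
    | cons Z P2' =>
      rcases eq_or_ne Z (sccOf A v) with rfl | hZv
      · exact hnotconsec ⟨P1, P2', by simp⟩
      · have hmv : sccOf A v ∈ P2' := by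
          rcases List.mem_cons.mp hm with h | h
          · exact absurd h.symm hZv
          · exact h
        -- suffix chain
        have hsuf : List.Chain' (CondArc A) (sccOf A u :: Z :: P2') :=
          hChain.suffix ⟨P1, rfl⟩
        have harcUZ : CondArc A (sccOf A u) Z := (List.isChain_cons_cons.mp hsuf).1
        have hZmem : Z ∈ P1 ++ sccOf A u :: Z :: P2' := by simp
        obtain ⟨z0, rfl⟩ := hSCCs Z hZmem
        have hw : z0 ∈ sccOf A z0 := mem_sccOf_self A z0
        have hZu : sccOf A z0 ≠ sccOf A u := by
          have hnd : (sccOf A u :: sccOf A z0 :: P2').Nodup :=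
            hNodup.sublist (List.IsSuffix.sublist ⟨P1, rfl⟩)
          intro h
          exact (List.nodup_cons.mp hnd).1 (h ▸ List.mem_cons_self)
        have hReach_uw : Reach A u z0 :=
          condReach (Relation.ReflTransGen.single harcUZ) ⟨u, rfl⟩ u huu z0 hw
        have hReach_wv : Reach A z0 v := by
          have hrt : Relation.ReflTransGen (CondArc A) (sccOf A z0) (sccOf A v) :=
            chain'_reach hChain (l1 := P1 ++ [sccOf A u]) (by simp) hmv
          exact condReach hrt ⟨z0, rfl⟩ z0 hw v hvv
        -- H decomposition
        obtain ⟨H1, H2, hH⟩ := hInf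
        have hHeq : H = H1 ++ u :: v :: H2 := by simpa using hH.symm
        obtain ⟨⟨hHchain, hHnodup, hHall⟩, -, -⟩ := hHam
        have hwH : z0 ∈ H := hHall z0
        rw [hHeq] at hwH hHchain
        rcases List.mem_append.mp hwH with h1 | h2
        · obtain ⟨a, b, rfl⟩ := List.append_of_mem h1
          have : Relation.ReflTransGen A z0 u :=
            chain'_reach hHchain (l1 := a) (l2 := b ++ u :: v :: H2) (by simp) (by simp)
          have : sccOf A z0 = sccOf A u :=
            sccOf_eq_of_mem (v := u) ⟨hReach_uw, this⟩
          exact hZu this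
        · rcases List.mem_cons.mp h2 with heq | h2'
          · exact hZu (by rw [heq])
          · rcases List.mem_cons.mp h2' with heq | h2''
            · exact hZv (by rw [heq])
            · have : Relation.ReflTransGen A v z0 :=
                chain'_reach hHchain (l1 := H1 ++ [u]) (l2 := H2) (by simp) h2''
              exact hZv (sccOf_eq_of_mem (v := v) ⟨this, hReach_wv⟩)
  · -- sccOf v before sccOf u : cycle contradiction
    have hrt : Relation.ReflTransGen (CondArc A) (sccOf A v) (sccOf A u) :=
      chain'_reach hChain rfl hm
    have hvu : Reach A v u := condReach hrt ⟨v, rfl⟩ v hvv u huu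
    exact hne (sccOf_eq_of_mem (v := v) ⟨hvu, Relation.ReflTransGen.single hA⟩)
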